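/- For every finite simple graph G with at least one edge, v(J(G)) = min{ |C| : C ⊆ V(G) is not a vertex cover of G, but there exists an edge {x_i, x_j} of G such that both C ∪ {x_i} and C ∪ {x_j} are vertex covers of G }. -/

import Mathlib

open MvPolynomial CategoryTheory

noncomputable section

/-- A set of vertices is a vertex cover if it meets every edge. -/
def IsVertexCover {V : Type} (G : SimpleGraph V) (C : Set V) : Prop :=
  ∀ ⦃u v : V⦄, G.Adj u v → u ∈ C ∨ v ∈ C

/-- A vertex cover minimal with respect to inclusion. -/
def IsMinimalVertexCover {V : Type} (G : SimpleGraph V) (C : Set V) : Prop :=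
  IsVertexCover G C ∧ ∀ C' ⊆ C, IsVertexCover G C' → C' = C

/-- `α₀(G)`: the minimum cardinality of a vertex cover of `G`. -/
def coverNumber {V : Type} (G : SimpleGraph V) : ℕ :=
  sInf {k | ∃ C : Set V, IsVertexCover G C ∧ C.ncard = k}

/-- `bight(I(G))`: the maximum cardinality of a minimal vertex cover of `G`. -/
def bigHeight {V : Type} (G : SimpleGraph V) : ℕ :=
  sSup {k | ∃ C : Set V, IsMinimalVertexCover G C ∧ C.ncard = k}

/-- The edge ideal `I(G) ⊆ K[x_v : v ∈ V]`, generated by the monomials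
`x_u * x_v` over the edges `{u,v}` of `G`. -/
def edgeIdeal (K : Type) [Field K] {V : Type} (G : SimpleGraph V) :
    Ideal (MvPolynomial V K) :=
  Ideal.span {m | ∃ u v : V, G.Adj u v ∧ m = X u * X v}

/-- The cover ideal `J(G) = ⋂_{{u,v} ∈ E(G)} ⟨x_u, x_v⟩`. -/
def coverIdeal (K : Type) [Field K] {V : Type} (G : SimpleGraph V) :
    Ideal (MvPolynomial V K) :=
  ⨅ (u : V) (v : V) (_ : G.Adj u v), Ideal.span {X u, X v}

/-- The v-number of a graded ideal `I`: the least `d ≥ 0` such that there is a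
homogeneous polynomial `f` of degree `d` with `I : f` a prime ideal. -/
def vNumber {K : Type} [Field K] {V : Type} (I : Ideal (MvPolynomial V K)) : ℕ :=
  sInf {d | ∃ f : MvPolynomial V K, f.IsHomogeneous d ∧
    (I.colon (Ideal.span {f})).IsPrime}

/-- The homogeneous maximal ideal `⟨x_1, …, x_n⟩` of the polynomial ring. -/
def maxIdeal (K : Type) [Field K] (V : Type) : Ideal (MvPolynomial V K) :=
  Ideal.span (Set.range (X : V → MvPolynomial V K))

/-- The depth of the module `M` with respect to the ideal `J`: the supremum of
the lengths of regular sequences on `M` consisting of elements of `J`. -/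
def mdepth {R : Type} [CommRing R] (J : Ideal R) (M : Type) [AddCommGroup M]
    [Module R M] : ℕ :=
  sSup {k | ∃ rs : List R, rs.length = k ∧ (∀ r ∈ rs, r ∈ J) ∧
    RingTheory.Sequence.IsRegular M rs}

/-- The projective dimension of an `R`-module `M`, characterized by the
vanishing of `Ext^i(M, N)` for all `i > d` and all modules `N`. -/
def projDim (R : Type) [CommRing R] (M : ModuleCat.{0} R) : ℕ :=
  sInf {d : ℕ | ∀ (N : ModuleCat.{0} R) (i : ℕ), d < i →
    Subsingleton (((Ext R (ModuleCat.{0} R) i).obj (Opposite.op M)).obj N)}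

namespace VNumAux

open MvPolynomial

variable {K : Type} [Field K] {n : ℕ}

lemma mem_spanXX {i j : Fin n} {f : MvPolynomial (Fin n) K} :
    f ∈ Ideal.span {X i, X j} ↔ ∀ m ∈ f.support, (m : Fin n →₀ ℕ) i ≠ 0 ∨ m j ≠ 0 := by
  rw [show ({X i, X j} : Set (MvPolynomial (Fin n) K)) = X '' {i, j} from
    (Set.image_pair _ _ _).symm, mem_ideal_span_X_image]
  constructor
  · intro h m hm
    obtain ⟨a, ha, hma⟩ := h m hm
    rcases ha with rfl | ha
    · exact Or.inl hma
    · rw [Set.mem_singleton_iff] at ha; subst ha; exact Or.inr hma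
  · intro h m hm
    rcases h m hm with h1 | h1
    · exact ⟨i, Set.mem_insert _ _, h1⟩
    · exact ⟨j, Set.mem_insert_of_mem _ rfl, h1⟩

lemma X_mem_spanXX {i j v : Fin n} :
    (X v : MvPolynomial (Fin n) K) ∈ Ideal.span {X i, X j} ↔ v = i ∨ v = j := by
  constructor
  · intro h
    have := mem_spanXX.mp h (Finsupp.single v 1) (by
      rw [MvPolynomial.support_X]; exact Finset.mem_singleton_self _)
    rcases this with h1 | h1
    · left
      by_contra hvi
      exact h1 (by rw [Finsupp.single_apply, if_neg hvi])
    · right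
      by_contra hvj
      exact h1 (by rw [Finsupp.single_apply, if_neg hvj])
  · rintro (rfl | rfl)
    · exact Ideal.subset_span (Set.mem_insert _ _)
    · exact Ideal.subset_span (Set.mem_insert_of_mem _ rfl)

lemma spanXX_isPrime {i j : Fin n} (hij : i ≠ j) :
    (Ideal.span {X i, X j} : Ideal (MvPolynomial (Fin n) K)).IsPrime := by
  classical
  set P : Ideal (MvPolynomial (Fin n) K) := Ideal.span {X i, X j} with hP
  set φ : MvPolynomial (Fin n) K →ₐ[K] MvPolynomial (Fin n) K :=
    aeval (fun v => if v = i ∨ v = j then 0 else X v) with hφ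
  have hXi : φ (X i) = 0 := by simp [hφ]
  have hXj : φ (X j) = 0 := by simp [hφ]
  have key : ∀ g : MvPolynomial (Fin n) K, g ∈ P ↔ φ g = 0 := by
    intro g
    constructor
    · intro hg
      obtain ⟨a, b, hab⟩ := Ideal.mem_span_pair.mp hg
      rw [← hab, map_add, map_mul, map_mul, hXi, hXj, mul_zero, mul_zero, add_zero]
    · intro hg
      have hmk : (Ideal.Quotient.mkₐ K P).comp φ = Ideal.Quotient.mkₐ K P := by
        apply MvPolynomial.algHom_ext
        intro v
        by_cases hv : v = i ∨ v = j
        · simp only [AlgHom.comp_apply, hφ, aeval_X, if_pos hv, map_zero]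
          symm
          rw [Ideal.Quotient.mkₐ_eq_mk, Ideal.Quotient.eq_zero_iff_mem]
          exact X_mem_spanXX.mpr hv
        · simp only [AlgHom.comp_apply, hφ, aeval_X, if_neg hv]
      have heq : Ideal.Quotient.mkₐ K P g = Ideal.Quotient.mkₐ K P (φ g) := by
        conv_lhs => rw [← hmk]
        rfl
      rw [hg, map_zero] at heq
      rwa [Ideal.Quotient.mkₐ_eq_mk, Ideal.Quotient.eq_zero_iff_mem] at heq
  constructor
  · intro h
    have h1 : (1 : MvPolynomial (Fin n) K) ∈ P := h ▸ Submodule.mem_top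
    rw [key, map_one] at h1
    exact one_ne_zero h1
  · intro f g hfg
    rw [key, map_mul] at hfg
    rcases mul_eq_zero.mp hfg with h | h
    · exact Or.inl ((key f).mpr h)
    · exact Or.inr ((key g).mpr h)

lemma mem_coverIdeal {G : SimpleGraph (Fin n)} {f : MvPolynomial (Fin n) K} :
    f ∈ coverIdeal K G ↔ ∀ u v : Fin n, G.Adj u v → f ∈ Ideal.span {X u, X v} := by
  simp [coverIdeal, Ideal.mem_iInf]

end VNumAux

namespace VNumAux
open MvPolynomial
variable {K : Type} [Field K] {n : ℕ}

lemma easyDir {G : SimpleGraph (Fin n)} {C : Set (Fin n)}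
    (hNC : ¬ IsVertexCover G C) {i j : Fin n} (hij : G.Adj i j)
    (hCi : IsVertexCover G (C ∪ {i})) (hCj : IsVertexCover G (C ∪ {j})) :
    ∃ f : MvPolynomial (Fin n) K, f.IsHomogeneous C.ncard ∧
      (((coverIdeal K G).colon (Ideal.span {f}))).IsPrime := by
  classical
  -- i and j are not in C
  have hiC : i ∉ C ∧ j ∉ C := by
    rw [IsVertexCover] at hNC
    push_neg at hNC
    obtain ⟨u, v, huv, huC, hvC⟩ := hNC
    rcases hCi huv with hu | hv
    · rcases hu with hu | hu
      · exact absurd hu huC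
      · -- u = i
        rcases hCj huv with hu' | hv'
        · rcases hu' with hu' | hu'
          · exact absurd hu' huC
          · exact absurd (hu.symm.trans hu') hij.ne
        · rcases hv' with hv' | hv'
          · exact absurd hv' hvC
          · rw [Set.mem_singleton_iff] at hu hv'
            subst hu; subst hv'
            exact ⟨huC, hvC⟩
    · rcases hv with hv | hv
      · exact absurd hv hvC
      · -- v = i
        rcases hCj huv with hu' | hv'
        · rcases hu' with hu' | hu'
          · exact absurd hu' huC
          · rw [Set.mem_singleton_iff] at hv hu'
            subst hv; subst hu'
            exact ⟨hvC, huC⟩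
        · rcases hv' with hv' | hv'
          · exact absurd hv' hvC
          · exact absurd (hv.symm.trans hv') hij.ne
  set s : Fin n →₀ ℕ := ∑ v ∈ C.toFinset, Finsupp.single v 1 with hs
  have s_apply : ∀ w, s w = if w ∈ C.toFinset then 1 else 0 := by
    intro w
    rw [hs, Finset.sum_apply']
    rw [Finset.sum_congr rfl (fun v _ => Finsupp.single_apply)]
    exact Finset.sum_ite_eq' _ _ _
  have s_supp : s.support = C.toFinset := by
    ext w
    rw [Finsupp.mem_support_iff, s_apply]
    by_cases hw : w ∈ C.toFinset <;> simp [hw]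
  have s_deg : s.degree = C.ncard := by
    rw [Finsupp.degree_apply, s_supp, Set.ncard_eq_toFinset_card']
    rw [Finset.sum_congr rfl (fun v hv => by rw [s_apply, if_pos hv])]
    simp
  set f : MvPolynomial (Fin n) K := monomial s 1 with hf
  have f_supp : f.support = {s} := by
    rw [hf, support_monomial, if_neg one_ne_zero]
  have f_notin : f ∉ Ideal.span {(X i : MvPolynomial (Fin n) K), X j} := by
    intro h
    have := mem_spanXX.mp h s (by rw [f_supp]; exact Finset.mem_singleton_self _)
    rcases this with h1 | h1
    · exact h1 (by rw [s_apply, if_neg (by simpa using hiC.1)])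
    · exact h1 (by rw [s_apply, if_neg (by simpa using hiC.2)])
  have f_in : ∀ u v : Fin n, (u ∈ C ∨ v ∈ C) →
      f ∈ Ideal.span {(X u : MvPolynomial (Fin n) K), X v} := by
    intro u v huv
    rw [mem_spanXX]
    intro m hm
    rw [f_supp, Finset.mem_singleton] at hm
    subst hm
    rcases huv with h | h
    · exact Or.inl (by rw [s_apply, if_pos (by simpa using h)]; exact one_ne_zero)
    · exact Or.inr (by rw [s_apply, if_pos (by simpa using h)]; exact one_ne_zero)
  have hcolon : (coverIdeal K G).colon (Ideal.span {f}) = Ideal.span {X i, X j} := by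
    ext x
    rw [Ideal.mem_colon_span_singleton]
    constructor
    · intro h
      have hxf := mem_coverIdeal.mp h i j hij
      rcases (spanXX_isPrime (K := K) hij.ne).mem_or_mem hxf with hx | hf'
      · exact hx
      · exact absurd hf' f_notin
    · intro hx
      rw [mem_coverIdeal]
      intro u v huv
      by_cases hc : u ∈ C ∨ v ∈ C
      · exact Ideal.mul_mem_left _ x (f_in u v hc)
      · push_neg at hc
        -- u, v ∉ C, so {u,v} = {i,j}
        have hx' : x ∈ Ideal.span {(X u : MvPolynomial (Fin n) K), X v} := by
          rcases hCi huv with hu | hv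
          · rcases hu with hu | hu
            · exact absurd hu hc.1
            · rw [Set.mem_singleton_iff] at hu; subst hu
              rcases hCj huv with hu' | hv'
              · rcases hu' with hu' | hu'
                · exact absurd hu' hc.1
                · exact absurd hu' hij.ne
              · rcases hv' with hv' | hv'
                · exact absurd hv' hc.2
                · rw [Set.mem_singleton_iff] at hv'; subst hv'
                  exact hx
          · rcases hv with hv | hv
            · exact absurd hv hc.2
            · rw [Set.mem_singleton_iff] at hv; subst hv
              rcases hCj huv with hu' | hv'
              · rcases hu' with hu' | hu'
                · exact absurd hu' hc.1
                · rw [Set.mem_singleton_iff] at hu'; subst hu'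
                  rw [Set.pair_comm]
                  exact hx
              · rcases hv' with hv' | hv'
                · exact absurd hv' hc.2
                · rw [Set.mem_singleton_iff] at hv'
                  exact absurd hv' hij.ne
        exact Ideal.mul_mem_right f _ hx'
  refine ⟨f, isHomogeneous_monomial 1 s_deg, ?_⟩
  rw [hcolon]
  exact spanXX_isPrime hij.ne

end VNumAux

namespace VNumAux
open MvPolynomial
variable {K : Type} [Field K] {n : ℕ}

lemma hardDir {G : SimpleGraph (Fin n)} {d : ℕ} {f : MvPolynomial (Fin n) K}
    (hf : f.IsHomogeneous d) (hp : ((coverIdeal K G).colon (Ideal.span {f})).IsPrime) :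
    ∃ C : Set (Fin n), C.ncard ≤ d ∧ ¬ IsVertexCover G C ∧
      ∃ i j : Fin n, G.Adj i j ∧ IsVertexCover G (C ∪ {i}) ∧
        IsVertexCover G (C ∪ {j}) := by
  classical
  set p := (coverIdeal K G).colon (Ideal.span {f}) with hpdef
  have hchar : ∀ x, x ∈ p ↔ ∀ u v : Fin n, G.Adj u v →
      f ∉ Ideal.span {(X u : MvPolynomial (Fin n) K), X v} →
      x ∈ Ideal.span {(X u : MvPolynomial (Fin n) K), X v} := by
    intro x
    rw [hpdef, Ideal.mem_colon_span_singleton, mem_coverIdeal]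
    constructor
    · intro h u v huv hfu
      rcases (spanXX_isPrime (K := K) huv.ne).mem_or_mem (h u v huv) with hx | hf'
      · exact hx
      · exact absurd hf' hfu
    · intro h u v huv
      by_cases hfu : f ∈ Ideal.span {(X u : MvPolynomial (Fin n) K), X v}
      · exact Ideal.mul_mem_left _ x hfu
      · exact Ideal.mul_mem_right f _ (h u v huv hfu)
  set F : Finset (Fin n × Fin n) := Finset.univ.filter
    (fun q => G.Adj q.1 q.2 ∧
      f ∉ Ideal.span {(X q.1 : MvPolynomial (Fin n) K), X q.2}) with hF
  have hinf : F.inf (fun q => Ideal.span {(X q.1 : MvPolynomial (Fin n) K), X q.2}) ≤ p := by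
    intro x hx
    rw [hchar]
    intro u v huv hfu
    have hq : (u, v) ∈ F := by
      rw [hF, Finset.mem_filter]
      exact ⟨Finset.mem_univ _, huv, hfu⟩
    exact Finset.inf_le (f := fun q : Fin n × Fin n =>
      Ideal.span {(X q.1 : MvPolynomial (Fin n) K), X q.2}) hq hx
  obtain ⟨q, hqF, hqle⟩ := (Ideal.IsPrime.inf_le' hp).mp hinf
  rw [hF, Finset.mem_filter] at hqF
  obtain ⟨-, hadj, hfnot⟩ := hqF
  obtain ⟨i, j⟩ := q
  rw [mem_spanXX] at hfnot
  push_neg at hfnot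
  obtain ⟨s, hs_mem, hsi, hsj⟩ := hfnot
  have hdeg : s.degree = d := by
    rw [Finsupp.degree_eq_weight_one]
    exact hf (Finsupp.mem_support_iff.mp hs_mem)
  have hcard : s.support.card ≤ d := by
    rw [← hdeg, Finsupp.degree_apply, Finset.card_eq_sum_ones]
    exact Finset.sum_le_sum fun v hv =>
      Nat.one_le_iff_ne_zero.mpr (Finsupp.mem_support_iff.mp hv)
  have hXi : ∀ u v : Fin n, G.Adj u v →
      f ∉ Ideal.span {(X u : MvPolynomial (Fin n) K), X v} →
      (i = u ∨ i = v) ∧ (j = u ∨ j = v) := by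
    intro u v huv hfu
    have hple : p ≤ Ideal.span {(X u : MvPolynomial (Fin n) K), X v} :=
      fun x hx => (hchar x).mp hx u v huv hfu
    constructor
    · exact X_mem_spanXX.mp (hple (hqle (Ideal.subset_span (Set.mem_insert _ _))))
    · exact X_mem_spanXX.mp (hple (hqle (Ideal.subset_span (Set.mem_insert_of_mem _ rfl))))
  refine ⟨↑s.support, by rw [Set.ncard_coe_finset]; exact hcard, ?_, i, j, hadj, ?_, ?_⟩
  · intro h
    rcases h hadj with h1 | h1
    · exact Finsupp.mem_support_iff.mp (by simpa using h1) hsi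
    · exact Finsupp.mem_support_iff.mp (by simpa using h1) hsj
  · intro u v huv
    by_cases hfu : f ∈ Ideal.span {(X u : MvPolynomial (Fin n) K), X v}
    · rcases mem_spanXX.mp hfu s hs_mem with h1 | h1
      · exact Or.inl (Or.inl (by simpa using Finsupp.mem_support_iff.mpr h1))
      · exact Or.inr (Or.inl (by simpa using Finsupp.mem_support_iff.mpr h1))
    · rcases (hXi u v huv hfu).1 with rfl | rfl
      · exact Or.inl (Or.inr rfl)
      · exact Or.inr (Or.inr rfl)
  · intro u v huv
    by_cases hfu : f ∈ Ideal.span {(X u : MvPolynomial (Fin n) K), X v}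
    · rcases mem_spanXX.mp hfu s hs_mem with h1 | h1
      · exact Or.inl (Or.inl (by simpa using Finsupp.mem_support_iff.mpr h1))
      · exact Or.inr (Or.inl (by simpa using Finsupp.mem_support_iff.mpr h1))
    · rcases (hXi u v huv hfu).2 with rfl | rfl
      · exact Or.inl (Or.inr rfl)
      · exact Or.inr (Or.inr rfl)

end VNumAux

/-- For a graph `G` with an edge, `v(J(G))` is the least cardinality of a set
`C` of vertices which is not a vertex cover, but such that `C ∪ {x_i}` and
`C ∪ {x_j}` are vertex covers for some edge `{x_i, x_j}`. -/
theorem vNumber_coverIdeal_eq_sInf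
    {K : Type} [Field K] {n : ℕ} (hn : 1 ≤ n) (G : SimpleGraph (Fin n))
    (hE : G.edgeSet.Nonempty) :
    vNumber (coverIdeal K G) =
      sInf {k | ∃ C : Set (Fin n), C.ncard = k ∧ ¬ IsVertexCover G C ∧
        ∃ i j : Fin n, G.Adj i j ∧ IsVertexCover G (C ∪ {i}) ∧
          IsVertexCover G (C ∪ {j})} := by
  classical
  have hvn : vNumber (coverIdeal K G) = sInf {d | ∃ f : MvPolynomial (Fin n) K,
      f.IsHomogeneous d ∧ (((coverIdeal K G).colon (Ideal.span {f}))).IsPrime} := rfl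
  have hST : ∀ k ∈ {k | ∃ C : Set (Fin n), C.ncard = k ∧ ¬ IsVertexCover G C ∧
      ∃ i j : Fin n, G.Adj i j ∧ IsVertexCover G (C ∪ {i}) ∧
        IsVertexCover G (C ∪ {j})},
      k ∈ {d | ∃ f : MvPolynomial (Fin n) K, f.IsHomogeneous d ∧
        (((coverIdeal K G).colon (Ideal.span {f}))).IsPrime} := by
    rintro k ⟨C, rfl, hNC, i, j, hij, hCi, hCj⟩
    exact VNumAux.easyDir (K := K) hNC hij hCi hCj
  have hSne : Set.Nonempty {k | ∃ C : Set (Fin n), C.ncard = k ∧ ¬ IsVertexCover G C ∧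
      ∃ i j : Fin n, G.Adj i j ∧ IsVertexCover G (C ∪ {i}) ∧
        IsVertexCover G (C ∪ {j})} := by
    obtain ⟨i, j, hij⟩ : ∃ i j : Fin n, G.Adj i j := by
      obtain ⟨e, he⟩ := hE
      induction e using Sym2.ind with
      | _ i j => exact ⟨i, j, he⟩
    refine ⟨({v | v ≠ i ∧ v ≠ j} : Set (Fin n)).ncard,
      {v | v ≠ i ∧ v ≠ j}, rfl, ?_, i, j, hij, ?_, ?_⟩
    · intro h
      rcases h hij with h1 | h1
      · exact h1.1 rfl
      · exact h1.2 rfl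
    · intro u v huv
      by_cases hu : u = j
      · subst hu
        by_cases hv : v = i
        · exact Or.inr (Or.inr hv)
        · exact Or.inr (Or.inl ⟨hv, huv.ne'⟩)
      · by_cases hu2 : u = i
        · exact Or.inl (Or.inr hu2)
        · exact Or.inl (Or.inl ⟨hu2, hu⟩)
    · intro u v huv
      by_cases hu : u = i
      · subst hu
        by_cases hv : v = j
        · exact Or.inr (Or.inr hv)
        · exact Or.inr (Or.inl ⟨huv.ne', hv⟩)
      · by_cases hu2 : u = j
        · exact Or.inl (Or.inr hu2)
        · exact Or.inl (Or.inl ⟨hu, hu2⟩)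
  have hTne : Set.Nonempty {d | ∃ f : MvPolynomial (Fin n) K, f.IsHomogeneous d ∧
      (((coverIdeal K G).colon (Ideal.span {f}))).IsPrime} := by
    obtain ⟨k, hk⟩ := hSne
    exact ⟨k, hST k hk⟩
  rw [hvn]
  apply le_antisymm
  · exact Nat.sInf_le (hST _ (Nat.sInf_mem hSne))
  · obtain ⟨f, hf1, hf2⟩ := Nat.sInf_mem hTne
    obtain ⟨C, hC1, hC2, i, j, h3, h4, h5⟩ := VNumAux.hardDir hf1 hf2
    exact le_trans (Nat.sInf_le ⟨C, rfl, hC2, i, j, h3, h4, h5⟩) hC1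

end
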